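/- For every N ≥ 0, there exists an optimal palindromic decomposition of the prefix of the Thue-Morse word of length 4N + 2 that does not end with a palindrome of length 3: the prefix of t of length 4N+2 equals some concatenation p_1⋯p_k of nonempty palindromes with k = PPL_t(4N+2) and the length of p_k different from 3. -/

import Mathlib

/-- The Thue–Morse word: `tm n` is the number of ones (sum of binary digits)
in the binary expansion of `n`, taken mod 2. -/
def tm (n : ℕ) : ℕ := (Nat.digits 2 n).sum % 2

/-- `ps` is a factorization of the finite word `w` into nonempty palindromes. -/
def IsPalDecomp (w : List ℕ) (ps : List (List ℕ)) : Prop :=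
  ps.flatten = w ∧ ∀ p ∈ ps, p ≠ [] ∧ p.Palindrome

/-- The palindromic length of a finite word: the least number of nonempty
palindromes whose concatenation is the word (0 for the empty word). -/
noncomputable def palLen (w : List ℕ) : ℕ :=
  sInf {k | ∃ ps, ps.length = k ∧ IsPalDecomp w ps}

/-- `pplTM n` is the palindromic length of the prefix of length `n`
of the Thue–Morse word. -/
noncomputable def pplTM (n : ℕ) : ℕ := palLen ((List.range n).map tm)

lemma tm_le_one (n : ℕ) : tm n ≤ 1 := Nat.lt_succ_iff.mp (Nat.mod_lt _ (by norm_num))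

lemma tm_zero : tm 0 = 0 := by unfold tm; simp

lemma tm_two_mul (k : ℕ) : tm (2 * k) = tm k := by
  rcases Nat.eq_zero_or_pos k with h | h
  · subst h; rfl
  · unfold tm
    rw [Nat.digits_def' (by norm_num : (1:ℕ) < 2) (by omega)]
    simp [Nat.mul_mod_right, Nat.mul_div_cancel_left _ (by norm_num : (0:ℕ) < 2)]

lemma tm_two_mul_add_one (k : ℕ) : tm (2 * k + 1) + tm k = 1 := by
  unfold tm
  rw [Nat.digits_def' (by norm_num : (1:ℕ) < 2) (by omega)]
  have h1 : (2 * k + 1) % 2 = 1 := by omega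
  have h2 : (2 * k + 1) / 2 = k := by omega
  rw [h1, h2]
  simp only [List.sum_cons]
  omega

lemma tm4_0 (k : ℕ) : tm (4 * k) = tm k := by
  have h : 4 * k = 2 * (2 * k) := by ring
  rw [h, tm_two_mul, tm_two_mul]

lemma tm4_1 (k : ℕ) : tm (4 * k + 1) + tm k = 1 := by
  have h : 4 * k + 1 = 2 * (2 * k) + 1 := by ring
  have h1 := tm_two_mul_add_one (2 * k)
  have h2 := tm_two_mul k
  rw [h]; omega

lemma tm4_2 (k : ℕ) : tm (4 * k + 2) + tm k = 1 := by
  have h : 4 * k + 2 = 2 * (2 * k + 1) := by ring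
  rw [h, tm_two_mul]
  exact tm_two_mul_add_one k

lemma tm4_3 (k : ℕ) : tm (4 * k + 3) = tm k := by
  have h : 4 * k + 3 = 2 * (2 * k + 1) + 1 := by ring
  have h1 := tm_two_mul_add_one (2 * k + 1)
  have h2 := tm_two_mul_add_one k
  have h3 := tm_le_one k
  have h4 := tm_le_one (2 * k + 1)
  rw [h]; omega

/-- no three consecutive equal letters -/
lemma tm_no_three (e : ℕ) (h1 : tm e = tm (e + 1)) (h2 : tm (e + 1) = tm (e + 2)) : False := by
  rcases Nat.even_or_odd e with ⟨f, hf⟩ | ⟨f, hf⟩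
  · have := tm_two_mul f
    have := tm_two_mul_add_one f
    have := tm_le_one f
    subst hf
    rw [two_mul] at *
    omega
  · have h3 := tm_two_mul_add_one f
    have h4 := tm_two_mul (f + 1)
    have h5 := tm_two_mul_add_one (f + 1)
    have h6 := tm_le_one f
    have h7 := tm_le_one (f + 1)
    subst hf
    have e1 : 2 * f + 1 + 1 = 2 * (f + 1) := by ring
    have e2 : 2 * f + 1 + 2 = 2 * (f + 1) + 1 := by ring
    rw [e1, e2] at h2; rw [e1] at h1
    omega

/-! ### Abstract palindrome/antipalindrome factor predicates -/

def pal (i L : ℕ) : Prop := ∀ a b, a + b + 1 = L → tm (i + a) = tm (i + b)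

def anti (j L : ℕ) : Prop := ∀ a b, a + b + 1 = L → tm (j + a) + tm (j + b) = 1

lemma anti_odd_false {j L : ℕ} (h : anti j L) (hodd : L % 2 = 1) : False := by
  obtain ⟨c, hc⟩ : ∃ c, L = 2 * c + 1 := ⟨L / 2, by omega⟩
  have := h c c (by omega)
  have := tm_le_one (j + c)
  omega

/-- descent: even palindrome at even position gives antipalindrome at half scale -/
lemma pal_descent_even {j l : ℕ} (h : pal (2 * j) (2 * l)) : anti j l := by
  intro a b hab
  have h1 := h (2 * a) (2 * b + 1) (by omega)
  have h2 : 2 * j + 2 * a = 2 * (j + a) := by ring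
  have h3 : 2 * j + (2 * b + 1) = 2 * (j + b) + 1 := by ring
  rw [h2, h3, tm_two_mul] at h1
  have h4 := tm_two_mul_add_one (j + b)
  omega

/-- descent: even palindrome at odd position -/
lemma pal_descent_odd {j l : ℕ} (h : pal (2 * j + 1) (2 * l)) (hl : 1 ≤ l) :
    anti (j + 1) (l - 1) := by
  intro a b hab
  have h1 := h (2 * a + 1) (2 * b + 2) (by omega)
  have h2 : 2 * j + 1 + (2 * a + 1) = 2 * (j + 1 + a) := by ring
  have h3 : 2 * j + 1 + (2 * b + 2) = 2 * (j + 1 + b) + 1 := by ring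
  rw [h2, h3, tm_two_mul] at h1
  have h4 := tm_two_mul_add_one (j + 1 + b)
  omega

/-- descent: antipalindrome at even position gives palindrome at half scale -/
lemma anti_descent_even {s l : ℕ} (h : anti (2 * s) (2 * l)) : pal s l := by
  intro a b hab
  have h1 := h (2 * a) (2 * b + 1) (by omega)
  have h2 : 2 * s + 2 * a = 2 * (s + a) := by ring
  have h3 : 2 * s + (2 * b + 1) = 2 * (s + b) + 1 := by ring
  rw [h2, h3, tm_two_mul] at h1
  have h4 := tm_two_mul_add_one (s + b)
  have := tm_le_one (s + a)
  have := tm_le_one (s + b)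
  omega

/-- descent: antipalindrome at odd position -/
lemma anti_descent_odd {s l : ℕ} (h : anti (2 * s + 1) (2 * l)) (hl : 1 ≤ l) :
    pal (s + 1) (l - 1) := by
  intro a b hab
  have h1 := h (2 * a + 1) (2 * b + 2) (by omega)
  have h2 : 2 * s + 1 + (2 * a + 1) = 2 * (s + 1 + a) := by ring
  have h3 : 2 * s + 1 + (2 * b + 2) = 2 * (s + 1 + b) + 1 := by ring
  rw [h2, h3, tm_two_mul] at h1
  have h4 := tm_two_mul_add_one (s + 1 + b)
  have := tm_le_one (s + 1 + a)
  have := tm_le_one (s + 1 + b)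
  omega

/-- no odd palindromic factor of length ≥ 5 -/
lemma pal_odd_long_false {i L : ℕ} (h : pal i L) (hodd : L % 2 = 1) (hL : 5 ≤ L) : False := by
  obtain ⟨c, hc⟩ : ∃ c, L = 2 * c + 1 ∧ 2 ≤ c := ⟨L / 2, by omega⟩
  obtain ⟨hc, hc2⟩ := hc
  -- center at i + c
  have h1 := h (c - 2) (c + 2) (by omega)
  have h2 := h (c - 1) (c + 1) (by omega)
  set j := i + (c - 2) with hj
  have e1 : i + (c + 2) = j + 4 := by omega
  have e2 : i + (c - 1) = j + 1 := by omega
  have e3 : i + (c + 1) = j + 3 := by omega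
  rw [e1] at h1
  rw [e2, e3] at h2
  -- h1 : tm j = tm (j+4), h2 : tm (j+1) = tm (j+3)
  rcases Nat.even_or_odd j with ⟨e, he⟩ | ⟨e, he⟩
  · -- j = 2e : get tm e = tm (e+1) and tm e = tm (e+2)
    have k1 := tm_two_mul_add_one e
    have k2 := tm_two_mul_add_one (e + 1)
    have k3 := tm_two_mul e
    have k4 := tm_two_mul (e + 2)
    have f1 : j + 1 = 2 * e + 1 := by omega
    have f2 : j + 3 = 2 * (e + 1) + 1 := by omega
    have f3 : j + 4 = 2 * (e + 2) := by omega
    have f4 : j = 2 * e := by omega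
    rw [f1, f2] at h2
    have f5 : 2 * e + 4 = 2 * (e + 2) := by ring
    rw [f4, f5, k3, k4] at h1
    -- h2 with k1 k2 : tm e = tm (e+1); h1 : tm e = tm (e+2)
    have g1 : tm e = tm (e + 1) := by omega
    have g2 : tm (e + 1) = tm (e + 2) := by omega
    exact tm_no_three e g1 g2
  · have k1 := tm_two_mul_add_one e
    have k2 := tm_two_mul_add_one (e + 2)
    have k3 := tm_two_mul (e + 1)
    have k4 := tm_two_mul (e + 2)
    have f1 : j = 2 * e + 1 := by omega
    have f2 : j + 4 = 2 * (e + 2) + 1 := by omega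
    have f3 : j + 1 = 2 * (e + 1) := by omega
    have f4 : j + 3 = 2 * (e + 2) := by omega
    rw [f1] at h1
    have f5 : 2 * e + 1 + 4 = 2 * (e + 2) + 1 := by ring
    rw [f5] at h1
    rw [f3, f4, k3, k4] at h2
    have g1 : tm e = tm (e + 2) := by omega
    have g2 : tm (e + 1) = tm (e + 2) := h2
    exact tm_no_three e (by omega) (by omega)

/-- palindrome extension -/
lemma pal_extend {s l : ℕ} (h : pal (s + 1) l) (he : tm s = tm (s + (l + 1))) :
    pal s (l + 2) := by
  intro a b hab
  rcases Nat.eq_zero_or_pos a with ha | ha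
  · subst ha
    rcases Nat.eq_zero_or_pos b with hb | hb
    · omega
    · have : b = l + 1 := by omega
      subst this; simpa using he
  · rcases Nat.eq_zero_or_pos b with hb | hb
    · subst hb
      have : a = l + 1 := by omega
      subst this; simpa using he.symm
    · have := h (a - 1) (b - 1) (by omega)
      have e1 : s + 1 + (a - 1) = s + a := by omega
      have e2 : s + 1 + (b - 1) = s + b := by omega
      rw [e1, e2] at this
      exact this

/-! ### Words -/

def Fac (i L : ℕ) : List ℕ := (List.range' i L).map tm

def W (m : ℕ) : List ℕ := (List.range m).map tm

lemma W_eq_Fac (m : ℕ) : W m = Fac 0 m := by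
  simp [W, Fac, List.range_eq_range']

@[simp] lemma length_Fac (i L : ℕ) : (Fac i L).length = L := by simp [Fac]

@[simp] lemma length_W (m : ℕ) : (W m).length = m := by simp [W]

lemma Fac_nonempty {i L : ℕ} (h : 1 ≤ L) : Fac i L ≠ [] := by
  intro hc
  have := congrArg List.length hc
  simp at this; omega

lemma W_append_Fac {i m : ℕ} (h : i ≤ m) : W m = W i ++ Fac i (m - i) := by
  rw [W_eq_Fac, W_eq_Fac]
  unfold Fac
  rw [← List.map_append]
  congr 1
  have := List.range'_append (s := 0) (m := i) (n := m - i) (step := 1)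
  simp at this
  rw [this]
  congr 1
  omega

lemma getElem_Fac (i L a : ℕ) (h : a < L) : (Fac i L)[a]'(by simpa using h) = tm (i + a) := by
  simp [Fac]

lemma Fac_palindrome_iff {i L : ℕ} : (Fac i L).Palindrome ↔ pal i L := by
  constructor
  · intro h a b hab
    have hrev := h.reverse_eq
    have ha : a < L := by omega
    have h2 : (Fac i L).reverse[a]'(by simpa using ha) = (Fac i L)[a]'(by simpa using ha) := by
      simp_rw [hrev]
    rw [List.getElem_reverse] at h2
    rw [getElem_Fac i L a ha] at h2
    have hb : (Fac i L).length - 1 - a = b := by simp; omega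
    simp_rw [hb] at h2
    rw [getElem_Fac i L b (by omega)] at h2
    exact h2.symm
  · intro h
    apply List.Palindrome.of_reverse_eq
    apply List.ext_getElem (by simp)
    intro n h1 h2
    rw [List.getElem_reverse]
    have hn : n < L := by simpa using h2
    rw [getElem_Fac i L n hn]
    have hb : (Fac i L).length - 1 - n = L - 1 - n := by simp
    simp_rw [hb]
    rw [getElem_Fac i L (L - 1 - n) (by omega)]
    exact h (L - 1 - n) n (by omega)

/-! ### palLen basics -/

lemma exists_decomp (w : List ℕ) : ∃ ps, ps.length = w.length ∧ IsPalDecomp w ps := by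
  refine ⟨w.map (fun c => [c]), by simp, ?_, ?_⟩
  · induction w with
    | nil => rfl
    | cons a l ih => simp [ih]
  · intro p hp
    simp at hp
    obtain ⟨a, _, rfl⟩ := hp
    exact ⟨by simp, List.Palindrome.singleton a⟩

lemma palLen_le {w : List ℕ} {ps : List (List ℕ)} (h : IsPalDecomp w ps) :
    palLen w ≤ ps.length := Nat.sInf_le ⟨ps, rfl, h⟩

lemma exists_optimal (w : List ℕ) : ∃ ps, IsPalDecomp w ps ∧ ps.length = palLen w := by
  obtain ⟨ps, hl, hd⟩ := exists_decomp w
  have hne : {k | ∃ ps, ps.length = k ∧ IsPalDecomp w ps}.Nonempty := ⟨ps.length, ps, rfl, hd⟩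
  obtain ⟨qs, hq1, hq2⟩ := Nat.sInf_mem hne
  exact ⟨qs, hq2, hq1⟩

lemma palLen_append_pal {w p : List ℕ} (hp : p ≠ []) (hpal : p.Palindrome) :
    palLen (w ++ p) ≤ palLen w + 1 := by
  obtain ⟨ps, hd, hl⟩ := exists_optimal w
  have : IsPalDecomp (w ++ p) (ps ++ [p]) := by
    constructor
    · rw [List.flatten_append, hd.1]; simp
    · intro q hq
      rcases List.mem_append.mp hq with h | h
      · exact hd.2 q h
      · simp at h; subst h; exact ⟨hp, hpal⟩
  have := palLen_le this
  simpa [hl] using this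

noncomputable def P (m : ℕ) : ℕ := palLen (W m)

lemma P_lipschitz (n : ℕ) : P (n + 1) ≤ P n + 1 := by
  have h : W (n + 1) = W n ++ Fac n (n + 1 - n) := W_append_Fac (by omega)
  have e : n + 1 - n = 1 := by omega
  rw [e] at h
  rw [P, h]
  exact palLen_append_pal (Fac_nonempty (by omega))
    (Fac_palindrome_iff.mpr (by
      intro a b hab
      have : a = 0 ∧ b = 0 := by omega
      rw [this.1, this.2]))

lemma P_le_of_palSuf {s n : ℕ} (hs : s < n) (h : pal s (n - s)) : P n ≤ P s + 1 := by
  have hW : W n = W s ++ Fac s (n - s) := W_append_Fac (by omega)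
  rw [P, hW]
  exact palLen_append_pal (Fac_nonempty (by omega)) (Fac_palindrome_iff.mpr h)

/-! ### last palindrome extraction -/

lemma exists_last_pal {m : ℕ} (hm : 1 ≤ m) :
    ∃ i, i < m ∧ pal i (m - i) ∧ P i + 1 ≤ P m := by
  obtain ⟨ps, hd, hlen⟩ := exists_optimal (W m)
  rcases List.eq_nil_or_concat ps with rfl | ⟨ps', q, rfl⟩
  · exfalso
    have := hd.1
    simp at this
    have := congrArg List.length this
    simp at this
    omega
  · rw [List.concat_eq_append] at *
    have hfl : ps'.flatten ++ q = W m := by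
      rw [← List.flatten_concat]; exact hd.1
    have hq : q ≠ [] ∧ q.Palindrome := hd.2 q (by simp)
    set L := q.length with hL
    have hL1 : 1 ≤ L := by
      rcases q with _ | _
      · exact absurd rfl hq.1
      · simp [hL]
    have hlm : ps'.flatten.length + L = m := by
      have h := congrArg List.length hfl
      rw [List.length_append, length_W] at h
      exact h
    set i := m - L with hi
    have hiL : i + L = m := by omega
    have him : i < m := by omega
    have hWm : W m = W i ++ Fac i (m - i) := W_append_Fac (by omega)
    rw [hWm] at hfl
    obtain ⟨hfl1, hfl2⟩ := List.append_inj hfl.symm (by rw [length_W]; omega)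
    refine ⟨i, him, ?_, ?_⟩
    · exact Fac_palindrome_iff.mp (by rw [hfl2]; exact hq.2)
    · have hd' : IsPalDecomp (W i) ps' := by
        refine ⟨hfl1.symm, fun p hp => hd.2 p (by simp [hp])⟩
      have h1 := palLen_le hd'
      have h2 : ps'.length + 1 = P m := by
        rw [P, ← hlen]; simp
      have : palLen (W i) = P i := rfl
      omega

/-! ### the morphism φ² -/

def phi2 (c : ℕ) : List ℕ := [c, 1 - c, 1 - c, c]

lemma phi2_reverse (c : ℕ) : (phi2 c).reverse = phi2 c := by simp [phi2]

lemma Fac_four (n : ℕ) : Fac (4 * n) 4 = phi2 (tm n) := by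
  have h1 := tm4_0 n
  have h2 := tm4_1 n
  have h3 := tm4_2 n
  have h4 := tm4_3 n
  have h5 := tm_le_one n
  simp only [Fac, List.range'_succ, List.range'_zero, List.map_cons, List.map_nil, phi2]
  have e2 : 4 * n + 1 + 1 = 4 * n + 2 := by ring
  have e3 : 4 * n + 1 + 1 + 1 = 4 * n + 3 := by ring
  rw [e2, e3]
  simp only [List.cons.injEq, and_true]
  exact ⟨h1, by omega, by omega, h4⟩

lemma W_four (n : ℕ) : W (4 * n) = (W n).flatMap phi2 := by
  induction n with
  | zero => rfl
  | succ n ih =>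
    have h1 : W (4 * (n + 1)) = W (4 * n) ++ Fac (4 * n) (4 * (n+1) - 4 * n) :=
      W_append_Fac (by omega)
    have e : 4 * (n + 1) - 4 * n = 4 := by omega
    rw [e] at h1
    have h2 : W (n + 1) = W n ++ Fac n (n + 1 - n) := W_append_Fac (by omega)
    have e2 : n + 1 - n = 1 := by omega
    rw [e2] at h2
    have h3 : Fac n 1 = [tm n] := by simp [Fac, List.range'_succ]
    rw [h1, ih, Fac_four, h2, h3, List.flatMap_append]
    congr

lemma Phi_palindrome {p : List ℕ} (h : p.Palindrome) : (p.flatMap phi2).Palindrome := by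
  apply List.Palindrome.of_reverse_eq
  rw [List.reverse_flatMap, h.reverse_eq]
  simp only [Function.comp_def, phi2_reverse]

lemma flatten_map_flatMap (ps : List (List ℕ)) :
    (ps.map (fun p => p.flatMap phi2)).flatten = ps.flatten.flatMap phi2 := by
  induction ps with
  | nil => rfl
  | cons a l ih => simp only [List.map_cons, List.flatten_cons, List.flatMap_append, ih]

lemma P_four_le (n : ℕ) : P (4 * n) ≤ P n := by
  obtain ⟨ps, hd, hlen⟩ := exists_optimal (W n)
  have hdec : IsPalDecomp (W (4 * n)) (ps.map (fun p => p.flatMap phi2)) := by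
    constructor
    · rw [W_four, ← hd.1, flatten_map_flatMap]
    · intro p hp
      simp at hp
      obtain ⟨a, ha, rfl⟩ := hp
      refine ⟨?_, Phi_palindrome (hd.2 a ha).2⟩
      have h1 : a ≠ [] := (hd.2 a ha).1
      intro hc
      have := congrArg List.length hc
      rw [List.length_flatMap] at this
      rcases a with _ | ⟨x, l⟩
      · exact h1 rfl
      · simp [phi2] at this
  have := palLen_le hdec
  rw [List.length_map, hlen] at this
  exact this

lemma P_four_one_le (n : ℕ) : P (4 * n + 1) ≤ P n + 1 :=
  le_trans (P_lipschitz (4 * n)) (by have := P_four_le n; omega)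

/-! ### impossibility of short palindromes at certain positions -/

lemma no_pal2_even {j : ℕ} (h : pal (2 * j) 2) : False := by
  have h1 := h 0 1 rfl
  simp only [Nat.add_zero] at h1
  have h2 := tm_two_mul j
  have h3 := tm_two_mul_add_one j
  have h4 := tm_le_one j
  omega

lemma no_pal3_0 {s : ℕ} (h : pal (4 * s) 3) : False := by
  have h1 := h 0 2 rfl
  simp only [Nat.add_zero] at h1
  have e : 4 * s + 2 = 4 * s + 2 := rfl
  have h2 := tm4_0 s
  have h3 := tm4_2 s
  have h4 := tm_le_one s
  omega

lemma no_pal3_1 {s : ℕ} (h : pal (4 * s + 1) 3) : False := by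
  have h1 := h 0 2 rfl
  simp only [Nat.add_zero] at h1
  have e : 4 * s + 1 + 2 = 4 * s + 3 := by ring
  rw [e] at h1
  have h2 := tm4_1 s
  have h3 := tm4_3 s
  have h4 := tm_le_one s
  omega

/-! ### descent lemmas for long even palindromic suffixes -/

lemma descent_m0 {n i : ℕ} (hpal : pal i (4 * n - i)) (hi : i < 4 * n)
    (h4 : 4 ≤ 4 * n - i) (he : (4 * n - i) % 2 = 0) :
    ∃ s, i = 4 * s ∧ s < n ∧ pal s (n - s) := by
  obtain ⟨l, hl⟩ : ∃ l, 4 * n - i = 2 * l := ⟨(4 * n - i) / 2, by omega⟩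
  obtain ⟨j, hj⟩ : ∃ j, i = 2 * j := ⟨i / 2, by omega⟩
  rw [hl, hj] at hpal
  have hanti := pal_descent_even hpal
  rcases Nat.even_or_odd l with ⟨l2, hl2⟩ | ⟨l2, hl2⟩
  · -- l = l2 + l2
    obtain ⟨s, hs⟩ : ∃ s, j = 2 * s := ⟨j / 2, by omega⟩
    have hll : l = 2 * l2 := by omega
    rw [hs, hll] at hanti
    have hp := anti_descent_even hanti
    have h1 : l2 = n - s := by omega
    exact ⟨s, by omega, by omega, h1 ▸ hp⟩
  · exact (anti_odd_false hanti (by omega)).elim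

lemma descent_m1 {n i : ℕ} (hpal : pal i (4 * n + 1 - i)) (hi : i < 4 * n + 1)
    (h4 : 4 ≤ 4 * n + 1 - i) (he : (4 * n + 1 - i) % 2 = 0) :
    ∃ s, i = 4 * s + 3 ∧ s + 1 < n ∧ pal (s + 1) (n - (s + 1)) := by
  obtain ⟨l, hl⟩ : ∃ l, 4 * n + 1 - i = 2 * l := ⟨(4 * n + 1 - i) / 2, by omega⟩
  obtain ⟨j, hj⟩ : ∃ j, i = 2 * j + 1 := ⟨i / 2, by omega⟩
  rw [hl, hj] at hpal
  have hanti := pal_descent_odd hpal (by omega)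
  rcases Nat.even_or_odd (l - 1) with ⟨l2, hl2⟩ | ⟨l2, hl2⟩
  · obtain ⟨s, hs⟩ : ∃ s, j = 2 * s + 1 := ⟨j / 2, by omega⟩
    have e1 : j + 1 = 2 * (s + 1) := by omega
    have e2 : l - 1 = 2 * l2 := by omega
    rw [e1, e2] at hanti
    have hp := anti_descent_even hanti
    have h1 : l2 = n - (s + 1) := by omega
    exact ⟨s, by omega, by omega, h1 ▸ hp⟩
  · exact (anti_odd_false hanti (by omega)).elim

lemma descent_m2 {n i : ℕ} (hpal : pal i (4 * n + 2 - i)) (hi : i < 4 * n + 2)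
    (h4 : 4 ≤ 4 * n + 2 - i) (he : (4 * n + 2 - i) % 2 = 0) :
    ∃ s, i = 4 * s + 2 ∧ s < n ∧ pal (s + 1) (n - (s + 1)) ∧ pal s (n + 1 - s) := by
  obtain ⟨l, hl⟩ : ∃ l, 4 * n + 2 - i = 2 * l := ⟨(4 * n + 2 - i) / 2, by omega⟩
  obtain ⟨j, hj⟩ : ∃ j, i = 2 * j := ⟨i / 2, by omega⟩
  rw [hl, hj] at hpal
  have hanti := pal_descent_even hpal
  rcases Nat.even_or_odd l with ⟨l2, hl2⟩ | ⟨l2, hl2⟩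
  · -- l even, j odd
    obtain ⟨s, hs⟩ : ∃ s, j = 2 * s + 1 := ⟨j / 2, by omega⟩
    have hll : l = 2 * l2 := by omega
    -- endpoint: tm s = tm n
    have hend := hanti 0 (l - 1) (by omega)
    have e1 : j + 0 = 2 * s + 1 := by omega
    have e2 : j + (l - 1) = 2 * n := by omega
    rw [e1, e2] at hend
    have k1 := tm_two_mul_add_one s
    have k2 := tm_two_mul n
    have k3 := tm_le_one s
    have k4 := tm_le_one n
    have htm : tm s = tm n := by omega
    rw [hs, hll] at hanti
    have hp := anti_descent_odd hanti (by omega)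
    have h1 : l2 - 1 = n - (s + 1) := by omega
    have hsn : s + l2 = n := by omega
    have hext : pal s (l2 - 1 + 2) := by
      apply pal_extend hp
      have e3 : s + (l2 - 1 + 1) = n := by omega
      rw [e3]; exact htm
    have h2 : l2 - 1 + 2 = n + 1 - s := by omega
    exact ⟨s, by omega, by omega, h1 ▸ hp, h2 ▸ hext⟩
  · exact (anti_odd_false hanti (by omega)).elim

lemma descent_m3 {n i : ℕ} (hpal : pal i (4 * n + 3 - i)) (hi : i < 4 * n + 3)
    (h4 : 4 ≤ 4 * n + 3 - i) (he : (4 * n + 3 - i) % 2 = 0) :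
    ∃ s, i = 4 * s + 1 ∧ s < n + 1 ∧ pal s (n + 1 - s) := by
  obtain ⟨l, hl⟩ : ∃ l, 4 * n + 3 - i = 2 * l := ⟨(4 * n + 3 - i) / 2, by omega⟩
  obtain ⟨j, hj⟩ : ∃ j, i = 2 * j + 1 := ⟨i / 2, by omega⟩
  -- endpoint at top level
  have hend := hpal 0 (4 * n + 3 - i - 1) (by omega)
  rw [hl, hj] at hpal
  have hanti := pal_descent_odd hpal (by omega)
  rcases Nat.even_or_odd (l - 1) with ⟨l2, hl2⟩ | ⟨l2, hl2⟩
  · obtain ⟨s, hs⟩ : ∃ s, j = 2 * s := ⟨j / 2, by omega⟩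
    have e1 : j + 1 = 2 * s + 1 := by omega
    have e2 : l - 1 = 2 * l2 := by omega
    rw [e1, e2] at hanti
    have hp := anti_descent_odd hanti (by omega)
    -- endpoint: tm s = tm n
    have e3 : i + 0 = 4 * s + 1 := by omega
    have e4 : i + (4 * n + 3 - i - 1) = 4 * n + 2 := by omega
    rw [e3, e4] at hend
    have k1 := tm4_1 s
    have k2 := tm4_2 n
    have k3 := tm_le_one s
    have k4 := tm_le_one n
    have htm : tm s = tm n := by omega
    have hsl : s + l2 = n := by omega
    have hext : pal s (l2 - 1 + 2) := by
      apply pal_extend hp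
      have e5 : s + (l2 - 1 + 1) = n := by omega
      rw [e5]; exact htm
    have h2 : l2 - 1 + 2 = n + 1 - s := by omega
    exact ⟨s, by omega, by omega, h2 ▸ hext⟩
  · exact (anti_odd_false hanti (by omega)).elim

/-! ### the lower-bound system -/

theorem LB : ∀ m : ℕ,
    (∀ n, m = 4 * n → P n ≤ P m) ∧
    (∀ n, m = 4 * n + 1 → P n + 1 ≤ P m) ∧
    (∀ n, m = 4 * n + 2 → min (P n) (P (n + 1)) + 2 ≤ P m) ∧
    (∀ n, m = 4 * n + 3 → P (n + 1) + 1 ≤ P m) := by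
  intro m
  induction m using Nat.strong_induction_on with
  | _ m IH =>
  rcases Nat.eq_zero_or_pos m with rfl | hm
  · refine ⟨?_, ?_, ?_, ?_⟩ <;> intro n hn
    · have : n = 0 := by omega
      subst this; exact le_refl _
    all_goals omega
  obtain ⟨i, him, hpal, hstep⟩ := exists_last_pal hm
  have hL1 : 1 ≤ m - i := by omega
  refine ⟨?_, ?_, ?_, ?_⟩ <;> intro n hn
  · -- m = 4n
    subst hn
    have hn1 : 1 ≤ n := by omega
    rcases Nat.lt_or_ge (4 * n - i) 4 with hshort | hlong
    · interval_cases h : (4 * n - i)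
      · -- L = 1 : i = 4(n-1)+3
        have hi : i = 4 * (n - 1) + 3 := by omega
        have := (IH i him).2.2.2 (n - 1) hi
        have he : n - 1 + 1 = n := by omega
        rw [he] at this
        omega
      · -- L = 2 : i even, impossible
        obtain ⟨j, hj⟩ : ∃ j, i = 2 * j := ⟨i / 2, by omega⟩
        rw [hj] at hpal
        exact (no_pal2_even hpal).elim
      · -- L = 3 : i = 4(n-1)+1, impossible
        have hi : i = 4 * (n - 1) + 1 := by omega
        rw [hi] at hpal
        exact (no_pal3_1 hpal).elim
    · rcases Nat.even_or_odd (4 * n - i) with ⟨c, hc⟩ | ⟨c, hc⟩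
      · obtain ⟨s, hs, hsn, hp⟩ := descent_m0 hpal him hlong (by omega)
        have h1 := (IH i him).1 s hs
        have h2 := P_le_of_palSuf hsn hp
        omega
      · exact (pal_odd_long_false hpal (by omega) (by omega)).elim
  · -- m = 4n+1
    subst hn
    rcases Nat.lt_or_ge (4 * n + 1 - i) 4 with hshort | hlong
    · interval_cases h : (4 * n + 1 - i)
      · -- L = 1 : i = 4n
        have := (IH i him).1 n (by omega)
        omega
      · -- L = 2 : i = 4(n-1)+3
        have hn1 : 1 ≤ n := by omega
        have hi : i = 4 * (n - 1) + 3 := by omega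
        have := (IH i him).2.2.2 (n - 1) hi
        have he : n - 1 + 1 = n := by omega
        rw [he] at this
        omega
      · -- L = 3 : i = 4(n-1)+2
        have hn1 : 1 ≤ n := by omega
        have hi : i = 4 * (n - 1) + 2 := by omega
        have h1 := (IH i him).2.2.1 (n - 1) hi
        have he : n - 1 + 1 = n := by omega
        rw [he] at h1
        have h2 := P_lipschitz (n - 1)
        rw [he] at h2
        omega
    · rcases Nat.even_or_odd (4 * n + 1 - i) with ⟨c, hc⟩ | ⟨c, hc⟩
      · obtain ⟨s, hs, hsn, hp⟩ := descent_m1 hpal him hlong (by omega)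
        have h1 := (IH i him).2.2.2 s hs
        have h2 := P_le_of_palSuf hsn hp
        omega
      · exact (pal_odd_long_false hpal (by omega) (by omega)).elim
  · -- m = 4n+2
    subst hn
    rcases Nat.lt_or_ge (4 * n + 2 - i) 4 with hshort | hlong
    · interval_cases h : (4 * n + 2 - i)
      · -- L = 1 : i = 4n+1
        have := (IH i him).2.1 n (by omega)
        omega
      · -- L = 2 : i = 4n even, impossible
        obtain ⟨j, hj⟩ : ∃ j, i = 2 * j := ⟨i / 2, by omega⟩
        rw [hj] at hpal
        exact (no_pal2_even hpal).elim
      · -- L = 3 : i = 4(n-1)+3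
        have hn1 : 1 ≤ n := by omega
        have hi : i = 4 * (n - 1) + 3 := by omega
        have h1 := (IH i him).2.2.2 (n - 1) hi
        have he : n - 1 + 1 = n := by omega
        rw [he] at h1
        omega
    · rcases Nat.even_or_odd (4 * n + 2 - i) with ⟨c, hc⟩ | ⟨c, hc⟩
      · obtain ⟨s, hs, hsn, hp1, hp2⟩ := descent_m2 hpal him hlong (by omega)
        have h1 := (IH i him).2.2.1 s hs
        have h2 : P (n + 1) ≤ P s + 1 := P_le_of_palSuf (by omega) hp2
        have h3 : P n ≤ P (s + 1) + 1 := by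
          rcases Nat.lt_or_ge (s + 1) n with hlt | hge
          · exact P_le_of_palSuf hlt hp1
          · have : s + 1 = n := by omega
            rw [this]; omega
        omega
      · exact (pal_odd_long_false hpal (by omega) (by omega)).elim
  · -- m = 4n+3
    subst hn
    rcases Nat.lt_or_ge (4 * n + 3 - i) 4 with hshort | hlong
    · interval_cases h : (4 * n + 3 - i)
      · -- L = 1 : i = 4n+2
        have h1 := (IH i him).2.2.1 n (by omega)
        have h2 := P_lipschitz n
        omega
      · -- L = 2 : i = 4n+1
        have h1 := (IH i him).2.1 n (by omega)
        have h2 := P_lipschitz n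
        omega
      · -- L = 3 : i = 4n, impossible
        have hi : i = 4 * n := by omega
        rw [hi] at hpal
        exact (no_pal3_0 hpal).elim
    · rcases Nat.even_or_odd (4 * n + 3 - i) with ⟨c, hc⟩ | ⟨c, hc⟩
      · obtain ⟨s, hs, hsn, hp⟩ := descent_m3 hpal him hlong (by omega)
        have h1 := (IH i him).2.1 s hs
        have h2 : P (n + 1) ≤ P s + 1 := P_le_of_palSuf hsn hp
        omega
      · exact (pal_odd_long_false hpal (by omega) (by omega)).elim

/-! ### final assembly -/

theorem main_thm (N : ℕ) :
    ∃ ps : List (List ℕ),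
      IsPalDecomp ((List.range (4 * N + 2)).map tm) ps ∧
      ps.length = palLen ((List.range (4 * N + 2)).map tm) ∧
      ∀ p, ps.getLast? = some p → p.length ≠ 3 := by
  have hWdef : (List.range (4 * N + 2)).map tm = W (4 * N + 2) := rfl
  rw [hWdef]
  obtain ⟨ps, hd, hlen⟩ := exists_optimal (W (4 * N + 2))
  have hne : ps ≠ [] := by
    intro hc
    subst hc
    have := hd.1
    have := congrArg List.length this
    simp at this
  rcases List.eq_nil_or_concat ps with rfl | ⟨ps', q, rfl⟩
  · exact absurd rfl hne
  rw [List.concat_eq_append] at *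
  have hgl : (ps' ++ [q]).getLast? = some q := by
    rw [List.getLast?_concat]
  by_cases hq3 : q.length = 3
  · -- the hard case: replace the decomposition
    have hq := hd.2 q (by simp)
    have hfl : ps'.flatten ++ q = W (4 * N + 2) := by
      rw [← List.flatten_concat]; exact hd.1
    have hlm : ps'.flatten.length + 3 = 4 * N + 2 := by
      have h := congrArg List.length hfl
      rw [List.length_append, length_W, hq3] at h
      exact h
    have hN1 : 1 ≤ N := by omega
    -- ps' decomposes W (4N-1)
    have hWm : W (4 * N + 2) = W (4 * N - 1) ++ Fac (4 * N - 1) (4 * N + 2 - (4 * N - 1)) :=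
      W_append_Fac (by omega)
    rw [hWm] at hfl
    obtain ⟨hfl1, hfl2⟩ := List.append_inj hfl (by rw [length_W]; omega)
    have hd' : IsPalDecomp (W (4 * N - 1)) ps' :=
      ⟨hfl1, fun p hp => hd.2 p (by simp [hp])⟩
    have h1 : P (4 * N - 1) ≤ ps'.length := palLen_le hd'
    have hk : ps'.length + 1 = P (4 * N + 2) := by
      rw [P, ← hlen]; simp
    -- lower bound for P (4N-1)
    have h2 : P ((N - 1) + 1) + 1 ≤ P (4 * (N - 1) + 3) := (LB (4 * (N - 1) + 3)).2.2.2 (N - 1) rfl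
    have he1 : (N - 1) + 1 = N := by omega
    have he2 : 4 * (N - 1) + 3 = 4 * N - 1 := by omega
    rw [he1, he2] at h2
    -- upper bound for P (4N+1)
    have h3 : P (4 * N + 1) ≤ P N + 1 := P_four_one_le N
    -- build the new decomposition
    obtain ⟨qs, hqd, hqlen⟩ := exists_optimal (W (4 * N + 1))
    have hW2 : W (4 * N + 2) = W (4 * N + 1) ++ Fac (4 * N + 1) (4 * N + 2 - (4 * N + 1)) :=
      W_append_Fac (by omega)
    have he3 : 4 * N + 2 - (4 * N + 1) = 1 := by omega
    rw [he3] at hW2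
    have hFac1 : Fac (4 * N + 1) 1 = [tm (4 * N + 1)] := by simp [Fac, List.range'_succ]
    refine ⟨qs ++ [[tm (4 * N + 1)]], ⟨?_, ?_⟩, ?_, ?_⟩
    · rw [List.flatten_append, hqd.1, hW2, hFac1]
      simp
    · intro p hp
      rcases List.mem_append.mp hp with h | h
      · exact hqd.2 p h
      · simp at h; subst h
        exact ⟨by simp, List.Palindrome.singleton _⟩
    · -- length equals palLen
      have hup : palLen (W (4 * N + 2)) ≤ (qs ++ [[tm (4 * N + 1)]]).length := by
        apply palLen_le
        constructor
        · rw [List.flatten_append, hqd.1, hW2, hFac1]; simp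
        · intro p hp
          rcases List.mem_append.mp hp with h | h
          · exact hqd.2 p h
          · simp at h; subst h
            exact ⟨by simp, List.Palindrome.singleton _⟩
      have hup' : P (4 * N + 2) ≤ (qs ++ [[tm (4 * N + 1)]]).length := hup
      have hlen2 : (qs ++ [[tm (4 * N + 1)]]).length = P (4 * N + 1) + 1 := by
        rw [List.length_append, hqlen]; rfl
      show (qs ++ [[tm (4 * N + 1)]]).length = P (4 * N + 2)
      omega
    · intro p hp
      rw [List.getLast?_concat] at hp
      have hpe : p = [tm (4 * N + 1)] := by
        injection hp with h; exact h.symm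
      rw [hpe]; simp
  · -- easy case
    refine ⟨ps' ++ [q], hd, hlen.symm ▸ rfl, ?_⟩
    intro p hp
    rw [hgl] at hp
    have hpe : p = q := by injection hp with h; exact h.symm
    rw [hpe]
    exact hq3

/-- There exists an optimal palindromic decomposition of the prefix of the
Thue–Morse word of length `4N + 2` that does not end with a palindrome of
length 3. -/
theorem pplTM_4N2_exists_no_length_three_end (N : ℕ) :
    ∃ ps : List (List ℕ),
      IsPalDecomp ((List.range (4 * N + 2)).map tm) ps ∧
      ps.length = pplTM (4 * N + 2) ∧
      ∀ p, ps.getLast? = some p → p.length ≠ 3 := by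
  unfold pplTM
  exact main_thm N
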